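/- Let u be a special tangential derivation of lie_2, i.e., u(x) = ⁅x, a_1⁆ and u(y) = ⁅y, b_1⁆ with ⁅x, a_1⁆ + ⁅y, b_1⁆ = 0 for some a_1, b_1 ∈ lie_2, and let v be a tangential derivation of lie_2 with v(x) = ⁅x, a_2⁆, v(y) = ⁅y, b_2⁆. Let ι: lie_2 → lie_3 be the homomorphism x ↦ x, y ↦ y, and θ: lie_2 → lie_3 the homomorphism x ↦ x + y, y ↦ z. Let U be the derivation of lie_3 (the simplicial image u^{1,2}) determined by U(x) = ⁅x, ι(a_1)⁆, U(y) = ⁅y, ι(b_1)⁆, U(z) = 0, and V the derivation of lie_3 (the coproduct image v^{12,3}) determined by V(x) = ⁅x, θ(a_2)⁆, V(y) = ⁅y, θ(a_2)⁆, V(z) = ⁅z, θ(b_2)⁆. Then ⁅U, V⁆ = 0. -/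

import Mathlib

open FreeLieAlgebra

noncomputable section

lemma lieSpan_range_of_eq_top (k : Type) [Field k] (X : Type) :
    LieSubalgebra.lieSpan k (FreeLieAlgebra k X) (Set.range (of k)) = ⊤ := by
  set S := LieSubalgebra.lieSpan k (FreeLieAlgebra k X) (Set.range (of k)) with hS
  have hmem : ∀ x : X, of k x ∈ S := fun x =>
    LieSubalgebra.subset_lieSpan ⟨x, rfl⟩
  let g : FreeLieAlgebra k X →ₗ⁅k⁆ S := FreeLieAlgebra.lift k (fun x => ⟨of k x, hmem x⟩)
  have hcomp : S.incl.comp g = LieHom.id := by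
    apply FreeLieAlgebra.hom_ext
    intro x
    simp [g, FreeLieAlgebra.lift_of_apply]
  rw [eq_top_iff]
  intro a _
  have := congrArg (fun F => F a) hcomp
  simp only [LieHom.comp_apply, LieHom.id_apply] at this
  rw [← this]
  exact (g a).2

/-- Key induction lemma: if a derivation composed with a hom acts as bracket with `m`
on the generators, it does so everywhere. -/
lemma key_lemma {k : Type} [Field k] {X : Type}
    {M : Type} [LieRing M] [LieAlgebra k M]
    (f : FreeLieAlgebra k X →ₗ⁅k⁆ M) (D : LieDerivation k M M) (m : M)
    (h : ∀ x : X, D (f (of k x)) = ⁅f (of k x), m⁆) (c : FreeLieAlgebra k X) :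
    D (f c) = ⁅f c, m⁆ := by
  have hc : c ∈ LieSubalgebra.lieSpan k (FreeLieAlgebra k X) (Set.range (of k)) := by
    rw [lieSpan_range_of_eq_top]; trivial
  refine LieSubalgebra.lieSpan_induction k (p := fun c _ => D (f c) = ⁅f c, m⁆) ?_ ?_ ?_ ?_ ?_ hc
  · rintro _ ⟨x, rfl⟩; exact h x
  · simp
  · intro x y _ _ hx hy; simp [hx, hy, add_lie]
  · intro r x _ hx; simp [hx, smul_lie]
  · intro x y _ _ hx hy
    simp only [LieHom.map_lie, D.apply_lie_eq_add, hx, hy]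
    rw [lie_lie (f x) (f y) m]
    have h3 : ⁅⁅f x, m⁆, f y⁆ = -⁅f y, ⁅f x, m⁆⁆ := by
      rw [lie_skew]
    rw [h3]
    abel

/-- The inclusion `ι : lie_2 → lie_3`, `x ↦ x`, `y ↦ y`. -/
def incl23 (k : Type) [Field k] :
    FreeLieAlgebra k (Fin 2) →ₗ⁅k⁆ FreeLieAlgebra k (Fin 3) :=
  FreeLieAlgebra.lift k ![of k (0 : Fin 3), of k (1 : Fin 3)]

/-- The coproduct homomorphism `θ : lie_2 → lie_3`, `x ↦ x + y`, `y ↦ z`. -/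
def theta (k : Type) [Field k] :
    FreeLieAlgebra k (Fin 2) →ₗ⁅k⁆ FreeLieAlgebra k (Fin 3) :=
  FreeLieAlgebra.lift k ![of k (0 : Fin 3) + of k (1 : Fin 3), of k (2 : Fin 3)]

/-- If `u` is a special tangential derivation of `lie_2` and `v` a tangential derivation,
then the simplicial image `U = u^{1,2}` commutes with the coproduct image `V = v^{12,3}`:
`⁅U, V⁆ = 0`. -/
theorem simplicial_commutes_with_coproduct (k : Type) [Field k] [CharZero k]
    (u v : LieDerivation k (FreeLieAlgebra k (Fin 2)) (FreeLieAlgebra k (Fin 2)))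
    (U V : LieDerivation k (FreeLieAlgebra k (Fin 3)) (FreeLieAlgebra k (Fin 3)))
    (a₁ b₁ a₂ b₂ : FreeLieAlgebra k (Fin 2))
    (hux : u (of k (0 : Fin 2)) = ⁅of k (0 : Fin 2), a₁⁆)
    (huy : u (of k (1 : Fin 2)) = ⁅of k (1 : Fin 2), b₁⁆)
    (huspecial : ⁅of k (0 : Fin 2), a₁⁆ + ⁅of k (1 : Fin 2), b₁⁆ = 0)
    (hvx : v (of k (0 : Fin 2)) = ⁅of k (0 : Fin 2), a₂⁆)
    (hvy : v (of k (1 : Fin 2)) = ⁅of k (1 : Fin 2), b₂⁆)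
    (hUx : U (of k (0 : Fin 3)) = ⁅of k (0 : Fin 3), incl23 k a₁⁆)
    (hUy : U (of k (1 : Fin 3)) = ⁅of k (1 : Fin 3), incl23 k b₁⁆)
    (hUz : U (of k (2 : Fin 3)) = 0)
    (hVx : V (of k (0 : Fin 3)) = ⁅of k (0 : Fin 3), theta k a₂⁆)
    (hVy : V (of k (1 : Fin 3)) = ⁅of k (1 : Fin 3), theta k a₂⁆)
    (hVz : V (of k (2 : Fin 3)) = ⁅of k (2 : Fin 3), theta k b₂⁆) :
    ⁅U, V⁆ = 0 := by
  have hincl0 : incl23 k (of k (0 : Fin 2)) = of k (0 : Fin 3) := by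
    simp [incl23, FreeLieAlgebra.lift_of_apply]
  have hincl1 : incl23 k (of k (1 : Fin 2)) = of k (1 : Fin 3) := by
    simp [incl23, FreeLieAlgebra.lift_of_apply]
  have htheta0 : theta k (of k (0 : Fin 2)) = of k (0 : Fin 3) + of k (1 : Fin 3) := by
    simp [theta, FreeLieAlgebra.lift_of_apply]
  have htheta1 : theta k (of k (1 : Fin 2)) = of k (2 : Fin 3) := by
    simp [theta, FreeLieAlgebra.lift_of_apply]
  -- V acts on the image of incl23 as bracket with θ a₂
  have hV : ∀ c, V (incl23 k c) = ⁅incl23 k c, theta k a₂⁆ := by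
    refine key_lemma (incl23 k) V (theta k a₂) ?_
    intro x
    fin_cases x
    · show V ((incl23 k) (of k (0 : Fin 2))) = ⁅(incl23 k) (of k (0 : Fin 2)), (theta k) a₂⁆
      rw [hincl0, hVx]
    · show V ((incl23 k) (of k (1 : Fin 2))) = ⁅(incl23 k) (of k (1 : Fin 2)), (theta k) a₂⁆
      rw [hincl1, hVy]
  -- U kills the image of theta
  have hU : ∀ c, U (theta k c) = 0 := by
    have := key_lemma (theta k) U 0 ?_
    · intro c; rw [this c, lie_zero]
    intro x
    fin_cases x
    · show U ((theta k) (of k (0 : Fin 2))) = ⁅(theta k) (of k (0 : Fin 2)), 0⁆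
      rw [htheta0, lie_zero, map_add, hUx, hUy]
      have : ⁅of k (0 : Fin 3), incl23 k a₁⁆ + ⁅of k (1 : Fin 3), incl23 k b₁⁆
          = incl23 k (⁅of k (0 : Fin 2), a₁⁆ + ⁅of k (1 : Fin 2), b₁⁆) := by
        rw [map_add, LieHom.map_lie, LieHom.map_lie, hincl0, hincl1]
      rw [this, huspecial, map_zero]
    · show U ((theta k) (of k (1 : Fin 2))) = ⁅(theta k) (of k (1 : Fin 2)), 0⁆
      rw [htheta1, hUz, lie_zero]
  apply LieDerivation.ext_of_lieSpan_eq_top (Set.range (of k))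
    (lieSpan_range_of_eq_top k (Fin 3))
  rintro _ ⟨i, rfl⟩
  rw [LieDerivation.commutator_apply, LieDerivation.zero_apply]
  fin_cases i
  · show U (V (of k (0 : Fin 3))) - V (U (of k (0 : Fin 3))) = 0
    rw [hUx, hVx, U.apply_lie_eq_add, V.apply_lie_eq_add, hUx, hVx, hU a₂, hV a₁]
    have h4 : ⁅⁅of k (0 : Fin 3), theta k a₂⁆, incl23 k a₁⁆
        = -⁅incl23 k a₁, ⁅of k (0 : Fin 3), theta k a₂⁆⁆ := by rw [lie_skew]
    rw [lie_lie (of k (0 : Fin 3)) (incl23 k a₁) (theta k a₂), h4]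
    simp only [lie_zero, zero_add, add_zero]
    abel
  · show U (V (of k (1 : Fin 3))) - V (U (of k (1 : Fin 3))) = 0
    rw [hUy, hVy, U.apply_lie_eq_add, V.apply_lie_eq_add, hUy, hVy, hU a₂, hV b₁]
    have h4 : ⁅⁅of k (1 : Fin 3), theta k a₂⁆, incl23 k b₁⁆
        = -⁅incl23 k b₁, ⁅of k (1 : Fin 3), theta k a₂⁆⁆ := by rw [lie_skew]
    rw [lie_lie (of k (1 : Fin 3)) (incl23 k b₁) (theta k a₂), h4]
    simp only [lie_zero, zero_add, add_zero]
    abel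
  · show U (V (of k (2 : Fin 3))) - V (U (of k (2 : Fin 3))) = 0
    rw [hUz, hVz, U.apply_lie_eq_add, hUz, hU b₂]
    simp
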